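/- Let φ = (xz+y²)ⁿ ∈ F[x,y,z] with n ≥ 1 and F a field of characteristic 0. Then the endomorphism of F[x,y,z] sending x ↦ x - 2y(xz+y²)ⁿ - z(xz+y²)^{2n}, y ↦ y + z(xz+y²)ⁿ, z ↦ z is an automorphism. -/

import Mathlib

open MvPolynomial

/-- The Nagata endomorphism for φ = (xz+y²)ⁿ, n ≥ 1, is an automorphism. -/
theorem nagata_power_automorphism (F : Type*) [Field F] [CharZero F]
    (n : ℕ) (hn : 1 ≤ n) :
    Function.Bijective
      (aeval (R := F)
        ![X 0 - 2 * X 1 * (X 0 * X 2 + X 1 ^ 2) ^ n - X 2 * (X 0 * X 2 + X 1 ^ 2) ^ (2 * n),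
          X 1 + X 2 * (X 0 * X 2 + X 1 ^ 2) ^ n,
          (X 2 : MvPolynomial (Fin 3) F)]) := by
  set f : Fin 3 → MvPolynomial (Fin 3) F :=
    ![X 0 - 2 * X 1 * (X 0 * X 2 + X 1 ^ 2) ^ n - X 2 * (X 0 * X 2 + X 1 ^ 2) ^ (2 * n),
      X 1 + X 2 * (X 0 * X 2 + X 1 ^ 2) ^ n, X 2] with hf
  set g : Fin 3 → MvPolynomial (Fin 3) F :=
    ![X 0 + 2 * X 1 * (X 0 * X 2 + X 1 ^ 2) ^ n - X 2 * (X 0 * X 2 + X 1 ^ 2) ^ (2 * n),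
      X 1 - X 2 * (X 0 * X 2 + X 1 ^ 2) ^ n, X 2] with hg
  have hΔg : (X 0 + 2 * X 1 * (X 0 * X 2 + X 1 ^ 2) ^ n - X 2 * (X 0 * X 2 + X 1 ^ 2) ^ (2 * n)) * X 2
      + (X 1 - X 2 * (X 0 * X 2 + X 1 ^ 2) ^ n) ^ 2 = (X 0 * X 2 + X 1 ^ 2 : MvPolynomial (Fin 3) F) := by ring
  have hΔf : (X 0 - 2 * X 1 * (X 0 * X 2 + X 1 ^ 2) ^ n - X 2 * (X 0 * X 2 + X 1 ^ 2) ^ (2 * n)) * X 2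
      + (X 1 + X 2 * (X 0 * X 2 + X 1 ^ 2) ^ n) ^ 2 = (X 0 * X 2 + X 1 ^ 2 : MvPolynomial (Fin 3) F) := by ring
  have h1 : (aeval (R := F) g).comp (aeval f) = AlgHom.id F _ := by
    apply algHom_ext
    intro i
    fin_cases i <;>
      simp [hf, hg, AlgHom.comp_apply, map_ofNat, hΔf, hΔg] <;> ring
  have h2 : (aeval (R := F) f).comp (aeval g) = AlgHom.id F _ := by
    apply algHom_ext
    intro i
    fin_cases i <;>
      simp [hf, hg, AlgHom.comp_apply, map_ofNat, hΔf, hΔg] <;> ring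
  exact Function.bijective_iff_has_inverse.mpr
    ⟨aeval g, fun p => by rw [← AlgHom.comp_apply, h1, AlgHom.id_apply],
      fun p => by rw [← AlgHom.comp_apply, h2, AlgHom.id_apply]⟩
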